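/- For a prime p and real α with 0 < α < 1, the quantity C_α := lim_{s→0⁺} (1 - 1/(B_α Ĵ(s))) equals p^{1-α} ((p^α - 1)/(p - 1))², and satisfies 0 < C_α < 1. Equivalently, B_α · Ĵ(0) = 1/(1 - C_α), where Ĵ(0) = (1-p^{-1}) Σ_{n=0}^∞ p^{-n(1-α)} = (1-p^{-1})/(1 - p^{α-1}) and B_α = (1-p^{-1})/(1-p^{-α-1}). -/

import Mathlib

open Real Filter

theorem stmt4 (p : ℕ) (hp : p.Prime) (α : ℝ) (hα0 : 0 < α) (hα1 : α < 1)
    (Bα Cα Jhat0 : ℝ) (Jhat : ℝ → ℝ)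
    (hB : Bα = (1 - (p : ℝ)⁻¹) / (1 - (p : ℝ) ^ (-α - 1)))
    (hC : Cα = (p : ℝ) ^ (1 - α) * (((p : ℝ) ^ α - 1) / ((p : ℝ) - 1)) ^ 2)
    (hJ0 : Jhat0 = (1 - (p : ℝ)⁻¹) / (1 - (p : ℝ) ^ (α - 1)))
    (hJhat : ∀ s : ℝ, Jhat s = (1 - (p : ℝ)⁻¹) *
      ∑' n : ℕ, (p : ℝ) ^ (-(n : ℝ)) / (s + (p : ℝ) ^ (-(α * (n : ℝ))))) :
    Filter.Tendsto (fun s : ℝ => 1 - 1 / (Bα * Jhat s))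
        (nhdsWithin 0 (Set.Ioi 0)) (nhds Cα) ∧
      (0 < Cα ∧ Cα < 1) ∧
      Bα * Jhat0 = 1 / (1 - Cα) ∧
      Jhat0 = (1 - (p : ℝ)⁻¹) * ∑' n : ℕ, (p : ℝ) ^ (-(n : ℝ) * (1 - α)) := by
  have hq' : (1 : ℝ) < (p : ℝ) := by exact_mod_cast hp.one_lt
  set q : ℝ := (p : ℝ) with hqdef
  have hq : (1 : ℝ) < q := hq'
  have hq0 : (0 : ℝ) < q := by linarith
  have hq1 : q - 1 ≠ 0 := by linarith
  set r : ℝ := q ^ (α - 1) with hrdef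
  have hr0 : 0 < r := rpow_pos_of_pos hq0 _
  have hr1 : r < 1 := rpow_lt_one_of_one_lt_of_neg hq (by linarith)
  set a : ℝ := q ^ α with hadef
  have ha1 : 1 < a := by
    have := rpow_lt_rpow_of_exponent_lt hq hα0
    simpa [rpow_zero] using this
  have haq : a < q := by
    have := rpow_lt_rpow_of_exponent_lt hq hα1
    simpa [rpow_one] using this
  have ha0 : 0 < a := by linarith
  clear_value q r a
  -- key identities
  have hra : r = a / q := by
    rw [hrdef, hadef, rpow_sub hq0, rpow_one]
  have hgeom : ∑' n : ℕ, r ^ n = (1 - r)⁻¹ := tsum_geometric_of_lt_one hr0.le hr1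
  have hkey : ∀ n : ℕ, q ^ (-(n : ℝ)) / q ^ (-(α * (n : ℝ))) = r ^ n := by
    intro n
    rw [← rpow_natCast r n, hrdef, ← rpow_mul hq0.le, ← rpow_sub hq0]
    congr 1; ring
  have hkey2 : ∀ n : ℕ, q ^ (-(n : ℝ) * (1 - α)) = r ^ n := by
    intro n
    rw [← rpow_natCast r n, hrdef, ← rpow_mul hq0.le]
    congr 1; ring
  -- last conjunct
  have hlast : Jhat0 = (1 - q⁻¹) * ∑' n : ℕ, q ^ (-(n : ℝ) * (1 - α)) := by
    rw [hJ0]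
    simp only [hkey2]
    rw [hgeom, div_eq_mul_inv]
  -- Cα in terms of a, q
  have hCa : Cα = q * (a - 1) ^ 2 / (a * (q - 1) ^ 2) := by
    have h1a : q ^ (1 - α) = q / a := by
      rw [hadef, rpow_sub hq0, rpow_one]
    rw [hC, h1a]
    field_simp
  have hC0 : 0 < Cα := by
    rw [hCa]
    apply div_pos (mul_pos hq0 (pow_pos (by linarith) 2))
      (mul_pos ha0 (pow_pos (by linarith) 2))
  have hC1 : Cα < 1 := by
    rw [hCa, div_lt_one (mul_pos ha0 (pow_pos (by linarith) 2))]
    nlinarith [mul_pos (sub_pos.2 haq) (show 0 < a * q - 1 by nlinarith)]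
  have hC1' : (0:ℝ) < 1 - Cα := by linarith
  -- Bα * Jhat0 = 1/(1-Cα)
  have hBa : Bα = (1 - q⁻¹) / (1 - (a * q)⁻¹) := by
    rw [hB]
    congr 2
    rw [show (-α - 1) = -(α + 1) by ring, rpow_neg hq0.le, rpow_add hq0, rpow_one, hadef]
  have hJa : Jhat0 = (1 - q⁻¹) / (1 - a / q) := by rw [hJ0, hra]
  have haq1 : (1:ℝ) < a * q := by nlinarith
  have hmain : Bα * Jhat0 = 1 / (1 - Cα) := by
    have hne4 : (1 : ℝ) - Cα ≠ 0 := by linarith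
    rw [eq_div_iff hne4, hBa, hJa, hCa]
    have hden : a * (q - 1) ^ 2 ≠ 0 := by positivity
    have e1 : 1 - q⁻¹ = (q - 1) / q := by field_simp
    have e2 : 1 - (a * q)⁻¹ = (a * q - 1) / (a * q) := by
      rw [eq_div_iff (by positivity : (a*q) ≠ 0)]
      field_simp
    have e3 : 1 - a / q = (q - a) / q := by
      rw [eq_div_iff hq0.ne']
      field_simp
    have e4 : 1 - q * (a - 1) ^ 2 / (a * (q - 1) ^ 2)
        = (q - a) * (a * q - 1) / (a * (q - 1) ^ 2) := by
      rw [eq_div_iff hden, sub_mul, div_mul_cancel₀ _ hden]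
      ring
    rw [e1, e2, e3, e4]
    have hqa : q - a ≠ 0 := by linarith
    have haq1' : a * q - 1 ≠ 0 := by linarith
    field_simp
    have haq1'' : -1 + q * a ≠ 0 := by linarith
    ring_nf
    field_simp
    ring
  -- limit
  have hsum : Summable (fun n : ℕ => r ^ n) := summable_geometric_of_lt_one hr0.le hr1
  have htsum : Tendsto (fun s : ℝ => ∑' n : ℕ, q ^ (-(n : ℝ)) / (s + q ^ (-(α * (n : ℝ)))))
      (nhdsWithin 0 (Set.Ioi 0)) (nhds (∑' n : ℕ, r ^ n)) := by
    apply tendsto_tsum_of_dominated_convergence hsum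
    · intro n
      have hd : (0:ℝ) + q ^ (-(α * (n : ℝ))) ≠ 0 := by
        rw [zero_add]; exact (rpow_pos_of_pos hq0 _).ne'
      have h : Tendsto (fun s : ℝ => q ^ (-(n : ℝ)) / (s + q ^ (-(α * (n : ℝ)))))
          (nhdsWithin 0 (Set.Ioi 0)) (nhds (q ^ (-(n : ℝ)) / (0 + q ^ (-(α * (n : ℝ)))))) := by
        apply Tendsto.div tendsto_const_nhds _ hd
        exact ((continuous_id.add continuous_const).tendsto 0).mono_left nhdsWithin_le_nhds
      rw [zero_add, hkey n] at h
      exact h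
    · filter_upwards [self_mem_nhdsWithin] with s hs n
      have hs0 : (0:ℝ) < s := hs
      have hd0 : (0:ℝ) < q ^ (-(α * (n : ℝ))) := rpow_pos_of_pos hq0 _
      have hnum : (0:ℝ) ≤ q ^ (-(n : ℝ)) := (rpow_pos_of_pos hq0 _).le
      rw [Real.norm_eq_abs, abs_of_nonneg (by positivity), ← hkey n]
      exact div_le_div_of_nonneg_left hnum hd0 (by linarith)
  have hJtend : Tendsto Jhat (nhdsWithin 0 (Set.Ioi 0)) (nhds Jhat0) := by
    have h := htsum.const_mul (1 - q⁻¹)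
    have heq : Jhat = fun s => (1 - q⁻¹) *
        ∑' n : ℕ, q ^ (-(n : ℝ)) / (s + q ^ (-(α * (n : ℝ)))) := funext hJhat
    rw [heq]
    convert h using 2
    rw [hJ0, hgeom, div_eq_mul_inv]
  have hBJ : Bα * Jhat0 ≠ 0 := by
    rw [hmain]
    positivity
  refine ⟨?_, ⟨hC0, hC1⟩, hmain, hlast⟩
  have hlim : Tendsto (fun s : ℝ => 1 - 1 / (Bα * Jhat s)) (nhdsWithin 0 (Set.Ioi 0))
      (nhds (1 - 1 / (Bα * Jhat0))) := by
    simpa [one_div] using ((hJtend.const_mul Bα).inv₀ hBJ).const_sub (1:ℝ)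
  have hval : (1 : ℝ) - 1 / (Bα * Jhat0) = Cα := by
    rw [hmain, one_div_one_div]; ring
  rwa [hval] at hlim
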